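/- For a ∈ ℂ with Im a < 1/2 and Re s > 0, the function v_+(s) := (1/Γ(ia/2 + 1/4)) e^{is/4} ∫₀^∞ e^{-ps} p^{ia/2 - 3/4}(1 + 2ip)^{-ia/2 - 3/4} dp satisfies v'' + (1/(2s)) v' + (1/16 - a/(4s)) v = 0, hence E_+(a,x) := v_+(x²) solves u'' + (x²/4 - a)u = 0. -/

import Mathlib

open Complex MeasureTheory Set Filter Topology

/-- The Laplace-integral solution `v₊(a,s)`. -/
noncomputable def vplus (a s : ℂ) : ℂ :=
  (Complex.Gamma (Complex.I * a / 2 + 1 / 4))⁻¹ * Complex.exp (Complex.I * s / 4) *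
    ∫ p in Set.Ioi (0 : ℝ),
      Complex.exp (-(p : ℂ) * s) * (p : ℂ) ^ (Complex.I * a / 2 - 3 / 4) *
        (1 + 2 * Complex.I * (p : ℂ)) ^ (-Complex.I * a / 2 - 3 / 4)

namespace VP

noncomputable def cc (a : ℂ) : ℂ := Complex.I * a / 2 - 3 / 4
noncomputable def ww (a : ℂ) : ℂ := -Complex.I * a / 2 - 3 / 4
noncomputable def f (a : ℂ) (p : ℝ) : ℂ :=
  (p : ℂ) ^ (cc a) * (1 + 2 * Complex.I * p) ^ (ww a)
noncomputable def P (a : ℂ) (n : ℕ) (s : ℂ) (p : ℝ) : ℂ :=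
  (p : ℂ) ^ n * Complex.exp (-(p : ℂ) * s) * f a p
noncomputable def W (a : ℂ) (n : ℕ) (s : ℂ) : ℂ := ∫ p in Ioi (0:ℝ), P a n s p
noncomputable def m (a : ℂ) : ℝ := max (ww a).re 0
noncomputable def CC (a : ℂ) : ℝ := Real.exp (Real.pi * |(ww a).im|) * 3 ^ (m a)
noncomputable def B (a : ℂ) (n : ℕ) (δ : ℝ) (p : ℝ) : ℝ :=
  CC a * ((p ^ ((cc a).re + n) + p ^ ((cc a).re + n + m a)) * Real.exp (-δ * p))

variable {a : ℂ}

lemma hcc_re (ha : a.im < 1 / 2) : -1 < (cc a).re := by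
  simp only [cc, Complex.sub_re, Complex.div_re, Complex.mul_re, Complex.I_re, Complex.I_im]
  norm_num
  nlinarith [Complex.normSq_apply (2:ℂ), sq_nonneg a.im]

lemma one_add_ne (p : ℝ) : (1 + 2 * Complex.I * p : ℂ) ≠ 0 := by
  intro h
  have := congrArg Complex.re h
  simp at this

lemma one_add_mem (p : ℝ) : (1 + 2 * Complex.I * p : ℂ) ∈ Complex.slitPlane := by
  rw [Complex.mem_slitPlane_iff]
  left; simp

lemma norm_one_add (p : ℝ) (hp : 0 ≤ p) :
    1 ≤ ‖(1 + 2 * Complex.I * p : ℂ)‖ ∧ ‖(1 + 2 * Complex.I * p : ℂ)‖ ≤ 1 + 2 * p := by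
  constructor
  · have h1 : |(1 + 2 * Complex.I * p : ℂ).re| ≤ ‖(1 + 2 * Complex.I * p : ℂ)‖ :=
      Complex.abs_re_le_norm _
    simp at h1
    simpa using h1
  · have h2 := Complex.norm_le_abs_re_add_abs_im (1 + 2 * Complex.I * p : ℂ)
    simp at h2
    calc ‖(1 + 2 * Complex.I * p : ℂ)‖ ≤ 1 + |2 * p| := by rw [abs_mul, abs_two]; exact h2
    _ ≤ 1 + 2 * p := by
        have : |2 * p| = 2 * p := abs_of_nonneg (by positivity)
        linarith

lemma norm_snd_le (p : ℝ) (hp : 0 ≤ p) :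
    ‖(1 + 2 * Complex.I * p : ℂ) ^ (ww a)‖ ≤
      Real.exp (Real.pi * |(ww a).im|) * (1 + 2 * p) ^ (m a) := by
  obtain ⟨h1, h2⟩ := norm_one_add p hp
  rw [Complex.norm_cpow_of_ne_zero (one_add_ne p)]
  rw [div_eq_mul_inv, ← Real.exp_neg]
  have harg : |(1 + 2 * Complex.I * (p:ℝ) : ℂ).arg| ≤ Real.pi := Complex.abs_arg_le_pi _
  have hexp : Real.exp (-((1 + 2 * Complex.I * p : ℂ).arg * (ww a).im)) ≤
      Real.exp (Real.pi * |(ww a).im|) := by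
    apply Real.exp_le_exp.mpr
    calc -((1 + 2 * Complex.I * p : ℂ).arg * (ww a).im) ≤
        |(1 + 2 * Complex.I * p : ℂ).arg * (ww a).im| := neg_le_abs _
      _ = |(1 + 2 * Complex.I * p : ℂ).arg| * |(ww a).im| := abs_mul _ _
      _ ≤ Real.pi * |(ww a).im| := by
          apply mul_le_mul_of_nonneg_right harg (abs_nonneg _)
  have hbase : ‖(1 + 2 * Complex.I * p : ℂ)‖ ^ (ww a).re ≤ (1 + 2 * p) ^ (m a) :=
    calc ‖(1 + 2 * Complex.I * p : ℂ)‖ ^ (ww a).re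
        ≤ ‖(1 + 2 * Complex.I * p : ℂ)‖ ^ (m a) :=
          Real.rpow_le_rpow_of_exponent_le h1 (le_max_left _ _)
      _ ≤ (1 + 2 * p) ^ (m a) := Real.rpow_le_rpow (by positivity) h2 (le_max_right _ _)
  calc ‖(1 + 2 * Complex.I * p : ℂ)‖ ^ (ww a).re *
        Real.exp (-((1 + 2 * Complex.I * p : ℂ).arg * (ww a).im))
      ≤ (1 + 2 * p) ^ (m a) * Real.exp (Real.pi * |(ww a).im|) := by
        apply mul_le_mul hbase hexp (Real.exp_pos _).le (by positivity)
    _ = Real.exp (Real.pi * |(ww a).im|) * (1 + 2 * p) ^ (m a) := mul_comm _ _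


lemma norm_P_le {n : ℕ} {δ : ℝ} (hδ : 0 < δ) {s : ℂ} (hs : δ ≤ s.re) {p : ℝ} (hp : 0 < p) :
    ‖P a n s p‖ ≤ B a n δ p := by
  have hfst : ‖(p:ℂ) ^ (cc a)‖ = p ^ (cc a).re := by
    rw [Complex.norm_cpow_eq_rpow_re_of_pos hp]
  have hexp : ‖Complex.exp (-(p:ℂ) * s)‖ ≤ Real.exp (-δ * p) := by
    rw [Complex.norm_exp]
    apply Real.exp_le_exp.mpr
    have : (-(p:ℂ) * s).re = -(p * s.re) := by
      simp [Complex.mul_re]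
    rw [this]
    nlinarith
  have hpow : ‖(p:ℂ) ^ n‖ = p ^ (n : ℝ) := by
    rw [norm_pow, Complex.norm_real, Real.norm_of_nonneg hp.le, ← Real.rpow_natCast]
  have h2p : (1 + 2 * p) ^ (m a) ≤ 3 ^ (m a) * (1 + p ^ (m a)) := by
    rcases le_total p 1 with h | h
    · calc (1 + 2 * p) ^ (m a) ≤ 3 ^ (m a) := by
            apply Real.rpow_le_rpow (by positivity) (by linarith) (le_max_right _ _)
        _ ≤ 3 ^ (m a) * (1 + p ^ (m a)) := by
            nlinarith [Real.rpow_nonneg hp.le (m a), Real.rpow_nonneg (by norm_num : (0:ℝ) ≤ 3) (m a)]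
    · calc (1 + 2 * p) ^ (m a) ≤ (3 * p) ^ (m a) := by
            apply Real.rpow_le_rpow (by positivity) (by linarith) (le_max_right _ _)
        _ = 3 ^ (m a) * p ^ (m a) := Real.mul_rpow (by norm_num) (by positivity)
        _ ≤ 3 ^ (m a) * (1 + p ^ (m a)) := by
            nlinarith [Real.rpow_nonneg (by norm_num : (0:ℝ) ≤ 3) (m a), Real.rpow_nonneg hp.le (m a)]
  have key : ‖P a n s p‖ ≤
      p ^ (n:ℝ) * Real.exp (-δ * p) * (p ^ (cc a).re *
        (Real.exp (Real.pi * |(ww a).im|) * (3 ^ (m a) * (1 + p ^ (m a))))) := by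
    have hsnd : ‖(1 + 2 * Complex.I * (p:ℝ) : ℂ) ^ (ww a)‖ ≤
        Real.exp (Real.pi * |(ww a).im|) * (3 ^ (m a) * (1 + p ^ (m a))) :=
      (norm_snd_le p hp.le).trans (mul_le_mul_of_nonneg_left h2p (Real.exp_pos _).le)
    rw [P, f, norm_mul, norm_mul, norm_mul, hpow, hfst]
    gcongr <;> first | positivity | exact hexp | exact hsnd
  refine key.trans (le_of_eq ?_)
  rw [B, CC, Real.rpow_add hp ((cc a).re + (n:ℝ)) (m a), Real.rpow_add hp ((cc a).re) (n:ℝ)]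
  ring

lemma B_int {n : ℕ} {δ : ℝ} (hδ : 0 < δ) (hre : -1 < (cc a).re) :
    IntegrableOn (B a n δ) (Ioi (0:ℝ)) := by
  have hm : 0 ≤ m a := le_max_right _ _
  have hn : (0:ℝ) ≤ n := Nat.cast_nonneg n
  have h1 : IntegrableOn (fun p : ℝ => p ^ ((cc a).re + n) * Real.exp (-δ * p)) (Ioi 0) := by
    have := integrableOn_rpow_mul_exp_neg_mul_rpow
      (show (-1:ℝ) < (cc a).re + n by linarith) (zero_lt_one (α := ℝ)) hδ
    simpa [Real.rpow_one] using this
  have h2 : IntegrableOn (fun p : ℝ => p ^ ((cc a).re + n + m a) * Real.exp (-δ * p)) (Ioi 0) := by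
    have := integrableOn_rpow_mul_exp_neg_mul_rpow
      (show (-1:ℝ) < (cc a).re + n + m a by linarith) (zero_lt_one (α := ℝ)) hδ
    simpa [Real.rpow_one] using this
  have : IntegrableOn (fun p : ℝ =>
      CC a * (p ^ ((cc a).re + n) * Real.exp (-δ * p) +
        p ^ ((cc a).re + n + m a) * Real.exp (-δ * p))) (Ioi 0) := ((h1.add h2).const_mul _)
  refine this.congr_fun (fun p _ => ?_) measurableSet_Ioi
  rw [B]; ring


lemma f_contOn : ContinuousOn (f a) (Ioi (0:ℝ)) := by
  apply ContinuousOn.mul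
  · intro p hp
    have h1 : ContinuousAt (fun z : ℂ => z ^ (cc a)) p := by
      apply continuousAt_cpow_const
      rw [Complex.mem_slitPlane_iff]
      left
      simpa using (hp : (0:ℝ) < p)
    exact (h1.comp Complex.continuous_ofReal.continuousAt).continuousWithinAt
  · intro p _
    have h1 : ContinuousAt (fun z : ℂ => z ^ (ww a)) (1 + 2 * Complex.I * p) :=
      continuousAt_cpow_const (one_add_mem p)
    have h0 : ContinuousAt (fun q : ℝ => (1 + 2 * Complex.I * q : ℂ)) p := by fun_prop
    have h2 : ContinuousAt ((fun z : ℂ => z ^ ww a) ∘ fun q : ℝ => (1 + 2 * Complex.I * q : ℂ)) p :=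
      ContinuousAt.comp (x := p) (f := fun q : ℝ => (1 + 2 * Complex.I * q : ℂ)) h1 h0
    exact h2.continuousWithinAt

lemma P_contOn (n : ℕ) (s : ℂ) : ContinuousOn (P a n s) (Ioi (0:ℝ)) := by
  apply ContinuousOn.mul _ f_contOn
  apply Continuous.continuousOn
  fun_prop

lemma P_meas (n : ℕ) (s : ℂ) : AEStronglyMeasurable (P a n s) (volume.restrict (Ioi (0:ℝ))) :=
  (P_contOn n s).aestronglyMeasurable measurableSet_Ioi

lemma P_int (ha : a.im < 1 / 2) (n : ℕ) {s : ℂ} (hs : 0 < s.re) :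
    IntegrableOn (P a n s) (Ioi (0:ℝ)) := by
  refine Integrable.mono' (B_int (a := a) (n := n) (δ := s.re) hs (hcc_re ha)) (P_meas n s) ?_
  filter_upwards [ae_restrict_mem measurableSet_Ioi] with p hp
  exact norm_P_le hs (le_refl _) hp

lemma hasDerivAt_W (ha : a.im < 1 / 2) (n : ℕ) {s : ℂ} (hs : 0 < s.re) :
    HasDerivAt (W a n) (-W a (n+1) s) s := by
  set δ := s.re / 2 with hδdef
  have hδ : 0 < δ := by positivity
  have key := hasDerivAt_integral_of_dominated_loc_of_deriv_le (μ := volume.restrict (Ioi (0:ℝ)))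
    (F := fun t p => P a n t p) (F' := fun t p => -P a (n+1) t p)
    (x₀ := s) (s := Metric.ball s δ) (bound := B a (n+1) δ) (Metric.ball_mem_nhds s hδ)
    (Filter.Eventually.of_forall fun t => P_meas n t)
    (P_int ha n hs) ((P_meas (n+1) s).neg)
    ?_ (B_int hδ (hcc_re ha)) ?_
  · have : (∫ p in Ioi (0:ℝ), -P a (n+1) s p) = -W a (n+1) s := by
      rw [integral_neg]; rfl
    rw [← this]
    exact key.2
  · filter_upwards [ae_restrict_mem measurableSet_Ioi] with p hp t ht
    rw [norm_neg]
    apply norm_P_le hδ _ hp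
    have : |t.re - s.re| ≤ ‖t - s‖ := by
      simpa using Complex.abs_re_le_norm (t - s)
    rw [Metric.mem_ball, Complex.dist_eq] at ht
    have h2 := abs_le.mp (le_of_lt (lt_of_le_of_lt this ht))
    rw [hδdef]; linarith [h2.1]
  · filter_upwards [ae_restrict_mem measurableSet_Ioi] with p hp t ht
    have hd : HasDerivAt (fun t : ℂ => Complex.exp (-(p:ℂ) * t)) 
        (-(p:ℂ) * Complex.exp (-(p:ℂ) * t)) t := by
      simpa [mul_comm] using (((hasDerivAt_id t).const_mul (-(p:ℂ))).cexp)
    have h2 : HasDerivAt (fun t : ℂ => P a n t p)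
        ((p:ℂ) ^ n * (-(p:ℂ) * Complex.exp (-(p:ℂ) * t)) * f a p) t :=
      (hd.const_mul ((p:ℂ) ^ n)).mul_const (f a p)
    refine h2.congr_deriv (Eq.symm ?_)
    rw [P]; push_cast; ring


noncomputable def g (a s : ℂ) (p : ℝ) : ℂ :=
  -(Complex.exp (-(p:ℂ) * s) * (p:ℂ) ^ (cc a + 1) * ((p:ℂ) - Complex.I/2) *
    (1 + 2 * Complex.I * p) ^ (ww a))

lemma hasDerivAt_g (s : ℂ) {p : ℝ} (hp : 0 < p) :
    HasDerivAt (g a s)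
      (s * P a 2 s p - (1/2 + Complex.I * s / 2) * P a 1 s p
        + (Complex.I/8 - a/4) * P a 0 s p) p := by
  have hmem : ((p:ℝ):ℂ) ∈ Complex.slitPlane := by
    rw [Complex.mem_slitPlane_iff]; left; simpa using hp
  have hA : HasDerivAt (fun z : ℂ => Complex.exp (-z * s))
      (Complex.exp (-(p:ℂ) * s) * (-1 * s)) (p:ℂ) :=
    ((hasDerivAt_id (p:ℂ)).neg.mul_const s).cexp
  have hB : HasDerivAt (fun z : ℂ => z ^ (cc a + 1))
      ((cc a + 1) * (p:ℂ) ^ (cc a + 1 - 1) * 1) (p:ℂ) :=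
    (hasDerivAt_id (p:ℂ)).cpow_const hmem
  have hC : HasDerivAt (fun z : ℂ => z - Complex.I/2) 1 (p:ℂ) :=
    (hasDerivAt_id (p:ℂ)).sub_const _
  have hD : HasDerivAt (fun z : ℂ => (1 + 2 * Complex.I * z) ^ (ww a))
      (ww a * (1 + 2 * Complex.I * p) ^ (ww a - 1) * (2 * Complex.I)) (p:ℂ) := by
    have hin : HasDerivAt (fun z : ℂ => 1 + 2 * Complex.I * z) (2 * Complex.I) (p:ℂ) := by
      simpa using (((hasDerivAt_id (p:ℂ)).const_mul (2 * Complex.I)).const_add 1)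
    exact hin.cpow_const (one_add_mem p)
  have total := ((((hA.mul hB).mul hC).mul hD)).neg.comp_ofReal (z := p)
  refine total.congr_deriv (Eq.symm ?_)
  have e1 : ((p:ℝ):ℂ) ^ (cc a + 1) = (p:ℂ) * (p:ℂ) ^ (cc a) := by
    rw [Complex.cpow_add _ _ (Complex.ofReal_ne_zero.mpr hp.ne'), Complex.cpow_one]; ring
  have e15 : ((p:ℝ):ℂ) ^ (cc a + 1 - 1) = (p:ℂ) ^ (cc a) := by norm_num
  have e2 : (1 + 2 * Complex.I * (p:ℝ) : ℂ) ^ (ww a - 1)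
      = (1 + 2 * Complex.I * p) ^ (ww a) / (1 + 2 * Complex.I * p) := by
    rw [Complex.cpow_sub _ _ (one_add_ne p), Complex.cpow_one]
  simp only [P, f, e1, e15, e2, pow_zero, pow_one, Pi.mul_apply]
  set X := ((p:ℝ):ℂ) ^ (cc a) with hX
  set Y := (1 + 2 * Complex.I * (p:ℝ) : ℂ) ^ (ww a) with hY
  set E := Complex.exp (-((p:ℝ):ℂ) * s) with hE
  have hz := one_add_ne p
  simp only [cc, ww]
  have hz2 : (1 + (p:ℂ) * 2 * Complex.I) ≠ 0 := by
    intro h; apply hz; linear_combination h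
  field_simp
  linear_combination ((96*(p:ℂ) - 32*a) * X * Y * E) * Complex.I_sq


lemma cc1_re : (cc a + 1).re = (cc a).re + 1 := by simp

lemma norm_g_le {δ : ℝ} (hδ : 0 < δ) {s : ℂ} (hs : δ ≤ s.re) {p : ℝ} (hp : 0 < p) :
    ‖g a s p‖ ≤ CC a * ((p ^ ((cc a).re + 1) + p ^ ((cc a).re + 1 + m a)) *
      ((p + 1/2) * Real.exp (-δ * p))) := by
  have hexp : ‖Complex.exp (-(p:ℂ) * s)‖ ≤ Real.exp (-δ * p) := by
    rw [Complex.norm_exp]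
    apply Real.exp_le_exp.mpr
    have : (-(p:ℂ) * s).re = -(p * s.re) := by simp [Complex.mul_re]
    rw [this]; nlinarith
  have hfst : ‖((p:ℝ):ℂ) ^ (cc a + 1)‖ = p ^ ((cc a).re + 1) := by
    rw [Complex.norm_cpow_eq_rpow_re_of_pos hp, cc1_re]
  have hmid : ‖((p:ℝ):ℂ) - Complex.I/2‖ ≤ p + 1/2 := by
    refine (norm_sub_le _ _).trans ?_
    have e1 : ‖((p:ℝ):ℂ)‖ = p := by rw [Complex.norm_real, Real.norm_of_nonneg hp.le]
    have e2 : ‖(Complex.I/2 : ℂ)‖ = 1/2 := by simp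
    rw [e1, e2]
  have h2p : (1 + 2 * p) ^ (m a) ≤ 3 ^ (m a) * (1 + p ^ (m a)) := by
    rcases le_total p 1 with h | h
    · calc (1 + 2 * p) ^ (m a) ≤ 3 ^ (m a) := by
            apply Real.rpow_le_rpow (by positivity) (by linarith) (le_max_right _ _)
        _ ≤ 3 ^ (m a) * (1 + p ^ (m a)) := by
            nlinarith [Real.rpow_nonneg hp.le (m a), Real.rpow_nonneg (by norm_num : (0:ℝ) ≤ 3) (m a)]
    · calc (1 + 2 * p) ^ (m a) ≤ (3 * p) ^ (m a) := by
            apply Real.rpow_le_rpow (by positivity) (by linarith) (le_max_right _ _)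
        _ = 3 ^ (m a) * p ^ (m a) := Real.mul_rpow (by norm_num) (by positivity)
        _ ≤ 3 ^ (m a) * (1 + p ^ (m a)) := by
            nlinarith [Real.rpow_nonneg (by norm_num : (0:ℝ) ≤ 3) (m a), Real.rpow_nonneg hp.le (m a)]
  have hsnd : ‖(1 + 2 * Complex.I * (p:ℝ) : ℂ) ^ (ww a)‖ ≤
      Real.exp (Real.pi * |(ww a).im|) * (3 ^ (m a) * (1 + p ^ (m a))) :=
    (norm_snd_le p hp.le).trans (mul_le_mul_of_nonneg_left h2p (Real.exp_pos _).le)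
  have key : ‖g a s p‖ ≤ Real.exp (-δ * p) * (p ^ ((cc a).re + 1)) * (p + 1/2) *
      (Real.exp (Real.pi * |(ww a).im|) * (3 ^ (m a) * (1 + p ^ (m a)))) := by
    rw [g, norm_neg, norm_mul, norm_mul, norm_mul, hfst]
    gcongr <;> first | positivity | exact hp.le | exact hexp | exact hmid | exact hsnd
  refine key.trans (le_of_eq ?_)
  rw [CC, Real.rpow_add hp ((cc a).re + 1) (m a)]
  ring

lemma cc1_ne (ha : a.im < 1 / 2) : cc a + 1 ≠ 0 := by
  intro h
  have := congrArg Complex.re h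
  rw [cc1_re] at this
  have h2 := hcc_re ha
  simp at this
  linarith

lemma g_zero (ha : a.im < 1 / 2) (s : ℂ) : g a s 0 = 0 := by
  simp [g, Complex.zero_cpow (cc1_ne ha)]

lemma tendsto_rpow_zero {t : ℝ} (ht : 0 < t) :
    Tendsto (fun p : ℝ => p ^ t) (𝓝[Ici (0:ℝ)] 0) (𝓝 0) := by
  have h := (Real.continuousAt_rpow_const 0 t (Or.inr ht.le)).tendsto
  rw [Real.zero_rpow ht.ne'] at h
  exact h.mono_left nhdsWithin_le_nhds

lemma g_contWithin (ha : a.im < 1 / 2) {s : ℂ} (hs : 0 < s.re) :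
    ContinuousWithinAt (g a s) (Ici (0:ℝ)) 0 := by
  have ht1 : 0 < (cc a).re + 1 := by linarith [hcc_re ha]
  have ht2 : 0 < (cc a).re + 1 + m a := by
    have : (0:ℝ) ≤ m a := le_max_right _ _
    linarith
  rw [ContinuousWithinAt, g_zero ha]
  have hb : Tendsto (fun p : ℝ => CC a * ((p ^ ((cc a).re + 1) + p ^ ((cc a).re + 1 + m a)) * (3/2)))
      (𝓝[Ici (0:ℝ)] 0) (𝓝 0) := by
    have := ((tendsto_rpow_zero ht1).add (tendsto_rpow_zero ht2)).const_mul ((3:ℝ)/2)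
    have h2 := this.const_mul (CC a)
    simpa [mul_comm, mul_assoc, mul_left_comm] using h2
  apply squeeze_zero_norm' _ hb
  filter_upwards [Ico_mem_nhdsGE_of_mem (by norm_num : (0:ℝ) ∈ Ico (0:ℝ) 1)] with p hp
  rcases eq_or_lt_of_le hp.1 with h0 | h0
  · rw [← h0, g_zero ha]
    simp only [norm_zero]
    have hCC : 0 ≤ CC a := by rw [CC]; positivity
    have b1 : (0:ℝ) ≤ (0:ℝ) ^ ((cc a).re + 1) := Real.rpow_nonneg le_rfl _
    have b2 : (0:ℝ) ≤ (0:ℝ) ^ ((cc a).re + 1 + m a) := Real.rpow_nonneg le_rfl _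
    nlinarith
  · refine (norm_g_le hs (le_refl _) h0).trans ?_
    have e1 : Real.exp (-s.re * p) ≤ 1 := by
      rw [Real.exp_le_one_iff]
      nlinarith
    have hCC : 0 ≤ CC a := by rw [CC]; positivity
    have h1 : (p + 1/2) * Real.exp (-s.re * p) ≤ 3/2 := by
      calc (p + 1/2) * Real.exp (-s.re * p) ≤ (p + 1/2) * 1 := by
            apply mul_le_mul_of_nonneg_left e1 (by linarith)
        _ ≤ 3/2 := by linarith [hp.2]
    refine mul_le_mul_of_nonneg_left ?_ hCC
    exact mul_le_mul_of_nonneg_left h1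
      (add_nonneg (Real.rpow_nonneg h0.le _) (Real.rpow_nonneg h0.le _))

lemma tendsto_aux {s : ℂ} (hs : 0 < s.re) (t : ℝ) :
    Tendsto (fun p : ℝ => p ^ t * ((p + 1/2) * Real.exp (-s.re * p))) atTop (𝓝 0) := by
  have h1 := tendsto_rpow_mul_exp_neg_mul_atTop_nhds_zero (t+1) s.re hs
  have h2 := (tendsto_rpow_mul_exp_neg_mul_atTop_nhds_zero t s.re hs).const_mul ((1:ℝ)/2)
  have h3 := h1.add h2
  norm_num at h3
  apply h3.congr'
  filter_upwards [eventually_gt_atTop (0:ℝ)] with p hp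
  rw [Real.rpow_add_one hp.ne' t]
  ring

lemma g_tendsto_atTop (ha : a.im < 1 / 2) {s : ℂ} (hs : 0 < s.re) :
    Tendsto (g a s) atTop (𝓝 0) := by
  have hb : Tendsto (fun p : ℝ => CC a * ((p ^ ((cc a).re + 1) + p ^ ((cc a).re + 1 + m a)) *
      ((p + 1/2) * Real.exp (-s.re * p)))) atTop (𝓝 0) := by
    have h3 := ((tendsto_aux hs ((cc a).re + 1)).add (tendsto_aux hs ((cc a).re + 1 + m a))).const_mul (CC a)
    norm_num at h3
    apply h3.congr
    intro p; ring
  apply squeeze_zero_norm' _ hb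
  filter_upwards [eventually_gt_atTop (0:ℝ)] with p hp
  exact norm_g_le hs (le_refl _) hp

lemma integral_identity (ha : a.im < 1 / 2) {s : ℂ} (hs : 0 < s.re) :
    s * W a 2 s - (1/2 + Complex.I * s / 2) * W a 1 s + (Complex.I/8 - a/4) * W a 0 s = 0 := by
  have i2 := (P_int ha 2 hs).const_mul s
  have i1 := (P_int ha 1 hs).const_mul (1/2 + Complex.I * s / 2)
  have i0 := (P_int ha 0 hs).const_mul (Complex.I/8 - a/4)
  have f'int : IntegrableOn (fun p => s * P a 2 s p - (1/2 + Complex.I * s / 2) * P a 1 s p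
      + (Complex.I/8 - a/4) * P a 0 s p) (Ioi (0:ℝ)) := (i2.sub i1).add i0
  have key := integral_Ioi_of_hasDerivAt_of_tendsto (g_contWithin ha hs)
    (fun p hp => hasDerivAt_g s hp) f'int (g_tendsto_atTop ha hs)
  rw [g_zero ha, sub_zero] at key
  have i21 : Integrable (fun x => s * P a 2 s x - (1/2 + Complex.I * s / 2) * P a 1 s x)
      (volume.restrict (Ioi (0:ℝ))) := i2.sub i1
  rw [integral_add i21 i0, integral_sub i2 i1, integral_const_mul, integral_const_mul,
    integral_const_mul] at key
  rw [W, W, W]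
  exact key


noncomputable def K (a : ℂ) : ℂ := (Complex.Gamma (Complex.I * a / 2 + 1 / 4))⁻¹

lemma vplus_eq {a : ℂ} (s : ℂ) : vplus a s =
    K a * Complex.exp (Complex.I * s / 4) * W a 0 s := by
  rw [vplus, W]
  have h : ∀ p : ℝ, Complex.exp (-(p:ℂ) * s) * (p:ℂ) ^ (Complex.I * a / 2 - 3 / 4) *
      (1 + 2 * Complex.I * (p:ℝ)) ^ (-Complex.I * a / 2 - 3 / 4) = P a 0 s p := fun p => by
    rw [P, f, cc, ww]; ring
  simp_rw [h]
  rw [K]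

noncomputable def V1 (a s : ℂ) : ℂ :=
  K a * Complex.exp (Complex.I * s / 4) * (Complex.I/4 * W a 0 s - W a 1 s)

noncomputable def V2 (a s : ℂ) : ℂ :=
  K a * Complex.exp (Complex.I * s / 4) *
    (Complex.I/4 * (Complex.I/4 * W a 0 s - W a 1 s) + (-(Complex.I/4) * W a 1 s + W a 2 s))

lemma hE' (s : ℂ) : HasDerivAt (fun s : ℂ => Complex.exp (Complex.I * s / 4))
    (Complex.I/4 * Complex.exp (Complex.I * s / 4)) s := by
  have h1 : HasDerivAt (fun s : ℂ => Complex.I * s / 4) (Complex.I/4) s := by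
    simpa using (((hasDerivAt_id s).const_mul Complex.I).div_const 4)
  simpa [mul_comm] using h1.cexp

lemma hasDerivAt_V0 (ha : a.im < 1 / 2) {s : ℂ} (hs : 0 < s.re) :
    HasDerivAt (vplus a) (V1 a s) s := by
  have hW := hasDerivAt_W ha 0 hs
  have h := ((hE' s).const_mul (K a)).mul hW
  have hfun : ((fun s => K a * Complex.exp (Complex.I * s / 4)) * W a 0) = vplus a :=
    funext fun s => (vplus_eq s).symm
  rw [hfun] at h
  refine h.congr_deriv (Eq.symm ?_)
  rw [V1]; ring

lemma hasDerivAt_V1 (ha : a.im < 1 / 2) {s : ℂ} (hs : 0 < s.re) :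
    HasDerivAt (V1 a) (V2 a s) s := by
  have hW0 := hasDerivAt_W ha 0 hs
  have hW1 := hasDerivAt_W ha 1 hs
  have hin : HasDerivAt (fun s => Complex.I/4 * W a 0 s - W a 1 s)
      (Complex.I/4 * -W a 1 s - -W a 2 s) s := (hW0.const_mul _).sub hW1
  have h := ((hE' s).const_mul (K a)).mul hin
  refine h.congr_deriv (Eq.symm ?_)
  rw [V2]; ring

lemma ode (ha : a.im < 1 / 2) {s : ℂ} (hs : 0 < s.re) :
    V2 a s + 1 / (2 * s) * V1 a s + (1 / 16 - a / (4 * s)) * vplus a s = 0 := by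
  have hT := integral_identity ha hs
  have hs0 : s ≠ 0 := fun h => by rw [h] at hs; simp at hs
  rw [V2, V1, vplus_eq]
  field_simp
  linear_combination (512 * K a * Complex.exp (Complex.I * s / 4)) * hT +
    (32 * s * K a * Complex.exp (Complex.I * s / 4) * W a 0 s) * Complex.I_sq

end VP

/-- For `Im a < 1/2` and `Re s > 0`, the function `v₊(a,s)` satisfies
`v'' + (1/(2s)) v' + (1/16 - a/(4s)) v = 0`; hence `E₊(a,x) := v₊(a,x²)` solves
`u'' + (x²/4 - a) u = 0`. -/
theorem vplus_solves (a : ℂ) (ha : a.im < 1 / 2) :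
    (∀ s : ℂ, 0 < s.re →
        deriv (deriv (vplus a)) s + (1 / (2 * s)) * deriv (vplus a) s
          + (1 / 16 - a / (4 * s)) * vplus a s = 0) ∧
      (∀ x : ℂ, 0 < (x ^ 2).re →
        deriv (deriv (fun t : ℂ => vplus a (t ^ 2))) x
          + (x ^ 2 / 4 - a) * vplus a (x ^ 2) = 0) := by
  have hopen : IsOpen {t : ℂ | 0 < t.re} := isOpen_lt continuous_const Complex.continuous_re
  constructor
  · intro s hs
    have h1 : deriv (vplus a) s = VP.V1 a s := (VP.hasDerivAt_V0 ha hs).deriv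
    have heq : deriv (vplus a) =ᶠ[nhds s] VP.V1 a := by
      filter_upwards [hopen.mem_nhds hs] with t ht
      exact (VP.hasDerivAt_V0 ha ht).deriv
    have h2 : deriv (deriv (vplus a)) s = VP.V2 a s := by
      rw [heq.deriv_eq, (VP.hasDerivAt_V1 ha hs).deriv]
    rw [h2, h1]
    exact VP.ode ha hs
  · intro x hx
    have hopen2 : IsOpen {t : ℂ | 0 < (t ^ 2).re} := by
      have hcont : Continuous fun t : ℂ => (t ^ 2 : ℂ).re :=
        Complex.continuous_re.comp (continuous_pow 2)
      exact isOpen_lt continuous_const hcont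
    have hu : ∀ y : ℂ, 0 < ((y:ℂ) ^ 2).re →
        HasDerivAt (fun t : ℂ => vplus a (t ^ 2)) (VP.V1 a (y ^ 2) * (2 * y)) y := by
      intro y hy
      have hp : HasDerivAt (fun t : ℂ => t ^ 2) (2 * y) y := by simpa using hasDerivAt_pow 2 y
      have := (VP.hasDerivAt_V0 ha hy).comp y hp
      simpa [Function.comp_def] using this
    have hU1 : HasDerivAt (fun y : ℂ => VP.V1 a (y ^ 2) * (2 * y))
        (VP.V2 a (x ^ 2) * (2 * x) * (2 * x) + VP.V1 a (x ^ 2) * 2) x := by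
      have hp : HasDerivAt (fun t : ℂ => t ^ 2) (2 * x) x := by simpa using hasDerivAt_pow 2 x
      have hc : HasDerivAt (fun y : ℂ => VP.V1 a (y ^ 2)) (VP.V2 a (x ^ 2) * (2 * x)) x := by
        have := (VP.hasDerivAt_V1 ha hx).comp x hp
        simpa [Function.comp_def] using this
      have hl : HasDerivAt (fun y : ℂ => 2 * y) 2 x := by
        simpa using (hasDerivAt_id x).const_mul 2
      exact hc.mul hl
    have h2 : deriv (deriv (fun t : ℂ => vplus a (t ^ 2))) x
        = VP.V2 a (x ^ 2) * (2 * x) * (2 * x) + VP.V1 a (x ^ 2) * 2 := by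
      have heq : deriv (fun t : ℂ => vplus a (t ^ 2)) =ᶠ[nhds x]
          (fun y => VP.V1 a (y ^ 2) * (2 * y)) := by
        filter_upwards [hopen2.mem_nhds hx] with t ht
        exact (hu t ht).deriv
      rw [heq.deriv_eq, hU1.deriv]
    rw [h2]
    have hode := VP.ode ha hx
    have hx0 : (x : ℂ) ^ 2 ≠ 0 := by
      intro h; rw [h] at hx; simp at hx
    have hx1 : x ≠ 0 := by
      rintro rfl; simp at hx
    field_simp at hode
    have h32 : (32:ℂ) * x ^ 2 ≠ 0 := by
      apply mul_ne_zero _ hx0; norm_num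
    have h3 : (32 * x ^ 2) * (VP.V2 a (x ^ 2) * (2 * x) * (2 * x) + VP.V1 a (x ^ 2) * 2
        + (x ^ 2 / 4 - a) * vplus a (x ^ 2)) = 0 := by
      linear_combination x ^ 2 * hode
    rcases mul_eq_zero.mp h3 with h | h
    · exact absurd h h32
    · exact h
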